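/- Suppose the chooser's values g^C_1,…,g^C_n are independent with g^C_i Gaussian of mean μ_i > 0 and variance σ_i² with σ_i > 0, the divider's values satisfy g^D_i > 0 for all i, and all critical ratios are equal: g^D_i/μ_i = g^D_j/μ_j for all i, j. Then for every division q ∈ [−1,1]^n the divider's expected utility satisfies U(q) ≤ (1/2)∑_{i=1}^n g^D_i; that is, the divider cannot exceed his baseline utility. -/

import Mathlib

open BigOperators MeasureTheory ProbabilityTheory NNReal ENNReal

lemma gaussian_reflect_aux (μm : ℝ) (v : ℝ≥0) :
    (gaussianReal μm v).map (fun x => 2 * μm - x) = gaussianReal μm v := by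
  have h : (fun x : ℝ => 2 * μm - x) = (fun x => x + 2 * μm) ∘ (fun x => (-1 : ℝ) * x) := by
    funext x; simp; ring
  have h2 : (⟨(-1 : ℝ) ^ 2, sq_nonneg _⟩ : ℝ≥0) = 1 := by ext; norm_num
  rw [h, ← Measure.map_map (by fun_prop) (by fun_prop), gaussianReal_map_const_mul,
    gaussianReal_map_add_const]
  congr 1
  · ring
  · ext; simp

lemma pi_gauss_reflect (n : ℕ) (m : Fin n → ℝ) (v : Fin n → ℝ≥0) :
    MeasurePreserving (fun x : Fin n → ℝ => fun i => 2 * m i - x i)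
      (Measure.pi fun i => gaussianReal (m i) (v i))
      (Measure.pi fun i => gaussianReal (m i) (v i)) := by
  have hmeas : Measurable (fun x : Fin n → ℝ => fun i => 2 * m i - x i) :=
    measurable_pi_lambda _ fun i => (measurable_pi_apply i).const_sub _
  refine ⟨hmeas, ?_⟩
  refine (Measure.pi_eq fun s hs => ?_).symm
  rw [Measure.map_apply hmeas (MeasurableSet.univ_pi hs)]
  have hpre : (fun x : Fin n → ℝ => fun i => 2 * m i - x i) ⁻¹' Set.pi Set.univ s
      = Set.pi Set.univ (fun i => (fun y => 2 * m i - y) ⁻¹' s i) := by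
    ext x; simp [Set.mem_pi]
  rw [hpre, Measure.pi_pi]
  refine Finset.prod_congr rfl fun i _ => ?_
  conv_rhs => rw [← gaussian_reflect_aux (m i) (v i)]
  rw [Measure.map_apply (by fun_prop) (hs i)]

/-- With chooser values independent Gaussians `g^C_i ~ N(m_i, σ_i²)`,
`m_i > 0`, `σ_i > 0`, divider values `g^D_i > 0`, and all critical ratios equal
(`g^D_i/m_i = g^D_j/m_j` for all `i, j`), the divider cannot exceed his baseline: for every
division `q ∈ [−1,1]^n`, `U(q) ≤ (1/2)∑ g^D_i`. -/
theorem equal_critical_ratios_baseline (n : ℕ) (gD m σ : Fin n → ℝ)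
    (hm : ∀ i, 0 < m i) (hσ : ∀ i, 0 < σ i) (hgD : ∀ i, 0 < gD i)
    (hratio : ∀ i j, gD i / m i = gD j / m j)
    (μ : Measure (Fin n → ℝ))
    (hμ : μ = Measure.pi fun i => gaussianReal (m i) (Real.toNNReal (σ i ^ 2)))
    (P : (Fin n → ℝ) → ℝ)
    (hP : ∀ q : Fin n → ℝ, P q = (μ {x | 0 < ∑ i, q i * x i}).toReal)
    (U : (Fin n → ℝ) → ℝ)
    (hU : ∀ q : Fin n → ℝ, U q = P q * ∑ i, (1 - (1 + q i) / 2) * gD i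
            + (1 - P q) * ∑ i, ((1 + q i) / 2) * gD i) :
    ∀ q : Fin n → ℝ, (∀ i, q i ∈ Set.Icc (-1 : ℝ) 1) →
      U q ≤ (1 / 2) * ∑ i, gD i := by
  intro q hq
  subst hμ
  set ν : Measure (Fin n → ℝ) :=
    Measure.pi fun i => gaussianReal (m i) (Real.toNNReal (σ i ^ 2)) with hν
  haveI : IsProbabilityMeasure ν := by rw [hν]; infer_instance
  -- ratio constant
  obtain ⟨r, hr, hgDr⟩ : ∃ r : ℝ, 0 < r ∧ ∀ i, gD i = r * m i := by
    rcases Nat.eq_zero_or_pos n with h | h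
    · exact ⟨1, one_pos, fun i => absurd i.2 (by omega)⟩
    · refine ⟨gD ⟨0, h⟩ / m ⟨0, h⟩, div_pos (hgD _) (hm _), fun i => ?_⟩
      rw [← hratio i ⟨0, h⟩, div_mul_cancel₀ _ (hm i).ne']
  set M : ℝ := ∑ i, q i * m i with hM
  have hS : ∑ i, q i * gD i = r * M := by
    rw [hM, Finset.mul_sum]
    exact Finset.sum_congr rfl fun i _ => by rw [hgDr i]; ring
  -- algebra: U q = baseline + (1/2 - P q) * (r * M)
  have h1 : ∑ i, (1 - (1 + q i) / 2) * gD i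
      = (1 / 2) * ∑ i, gD i - (1 / 2) * ∑ i, q i * gD i := by
    rw [Finset.mul_sum, Finset.mul_sum, ← Finset.sum_sub_distrib]
    exact Finset.sum_congr rfl fun i _ => by ring
  have h2 : ∑ i, ((1 + q i) / 2) * gD i
      = (1 / 2) * ∑ i, gD i + (1 / 2) * ∑ i, q i * gD i := by
    rw [Finset.mul_sum, Finset.mul_sum, ← Finset.sum_add_distrib]
    exact Finset.sum_congr rfl fun i _ => by ring
  have hUeq : U q = (1 / 2) * ∑ i, gD i + (1 / 2 - P q) * (r * M) := by
    rw [hU, h1, h2, hS]; ring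
  rw [hUeq]
  -- suffices: (1/2 - P q) * (r * M) ≤ 0
  have hmeasT : Measurable fun x : Fin n → ℝ => ∑ i, q i * x i := by fun_prop
  have hsetA : MeasurableSet {x : Fin n → ℝ | 0 < ∑ i, q i * x i} :=
    measurableSet_lt measurable_const hmeasT
  have hsetB : MeasurableSet {x : Fin n → ℝ | ∑ i, q i * x i < 2 * M} :=
    measurableSet_lt hmeasT measurable_const
  -- key symmetry
  have hkey : ν {x | 0 < ∑ i, q i * x i} = ν {x | ∑ i, q i * x i < 2 * M} := by
    have hpres := pi_gauss_reflect n m (fun i => Real.toNNReal (σ i ^ 2))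
    have := hpres.measure_preimage hsetA.nullMeasurableSet
    rw [← this]
    congr 1
    ext x
    simp only [Set.mem_preimage, Set.mem_setOf_eq]
    have : ∑ i, q i * (2 * m i - x i) = 2 * M - ∑ i, q i * x i := by
      rw [hM, Finset.mul_sum, ← Finset.sum_sub_distrib]
      exact Finset.sum_congr rfl fun i _ => by ring
    rw [this]
    constructor <;> intro h <;> linarith
  have hfinA : ν {x | 0 < ∑ i, q i * x i} ≠ ⊤ := measure_ne_top _ _
  have hfinB : ν {x | ∑ i, q i * x i < 2 * M} ≠ ⊤ := measure_ne_top _ _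
  rcases lt_trichotomy M 0 with hM0 | hM0 | hM0
  · -- M < 0 : sets disjoint, P ≤ 1/2
    have hdisj : Disjoint {x : Fin n → ℝ | 0 < ∑ i, q i * x i}
        {x : Fin n → ℝ | ∑ i, q i * x i < 2 * M} := by
      rw [Set.disjoint_left]
      intro x hx hx'
      simp only [Set.mem_setOf_eq] at hx hx'
      linarith
    have hle : ν {x | 0 < ∑ i, q i * x i} + ν {x | ∑ i, q i * x i < 2 * M} ≤ 1 := by
      rw [← measure_union hdisj hsetB]
      exact prob_le_one
    rw [← hkey] at hle
    have hPle : P q ≤ 1 / 2 := by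
      rw [hP]
      have := ENNReal.toReal_mono (by norm_num) hle
      rw [ENNReal.toReal_add hfinA hfinA, ENNReal.toReal_one] at this
      linarith
    have : 0 ≤ (1 / 2 - P q) := by linarith
    nlinarith [mul_pos hr (neg_pos.mpr hM0)]
  · -- M = 0
    rw [hM0]; simp
  · -- M > 0 : sets cover, P ≥ 1/2
    have hcover : {x : Fin n → ℝ | 0 < ∑ i, q i * x i}
        ∪ {x : Fin n → ℝ | ∑ i, q i * x i < 2 * M} = Set.univ := by
      ext x
      simp only [Set.mem_union, Set.mem_setOf_eq, Set.mem_univ, iff_true]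
      by_cases h : 0 < ∑ i, q i * x i
      · exact Or.inl h
      · exact Or.inr (by push_neg at h; linarith)
    have hge : (1 : ℝ≥0∞) ≤ ν {x | 0 < ∑ i, q i * x i} + ν {x | ∑ i, q i * x i < 2 * M} := by
      have := measure_union_le (μ := ν) {x : Fin n → ℝ | 0 < ∑ i, q i * x i}
        {x : Fin n → ℝ | ∑ i, q i * x i < 2 * M}
      rw [hcover, measure_univ] at this
      exact this
    rw [← hkey] at hge
    have hPge : 1 / 2 ≤ P q := by
      rw [hP]
      have := ENNReal.toReal_mono (ENNReal.add_ne_top.mpr ⟨hfinA, hfinA⟩) hge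
      rw [ENNReal.toReal_add hfinA hfinA, ENNReal.toReal_one] at this
      linarith
    nlinarith [mul_pos hr hM0]
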